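/- Let n and m be positive even integers and let Λ be a complex (m/2)×n matrix. Define B = 2i·Θ_n·[−Λ† Λᵀ]·Γ_m, where [−Λ† Λᵀ] denotes the n×m horizontal concatenation of −Λ† and Λᵀ. Then B·Bᵀ = −4·Θ_n·Re(Λ†·Λ)·Θ_n, where Re denotes the entrywise real part. -/

import Mathlib

open Matrix
open scoped Kronecker ComplexConjugate

noncomputable section

/-- For an even positive integer `m`, `Theta R m` is the `m × m` block-diagonal matrix
`I_{m/2} ⊗ J` with `J = [[0,1],[-1,0]]`, written entrywise. -/
def Theta (R : Type*) [Ring R] (m : ℕ) : Matrix (Fin m) (Fin m) R :=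
  Matrix.of fun i j =>
    if (i : ℕ) % 2 = 0 ∧ (j : ℕ) = (i : ℕ) + 1 then 1
    else if (j : ℕ) % 2 = 0 ∧ (i : ℕ) = (j : ℕ) + 1 then -1 else 0

/-- The `m × m` permutation matrix `P_m` sending `(a₁, …, a_m)` to
`(a₁, a₃, …, a_{m−1}, a₂, a₄, …, a_m)` (for `m` even). -/
def Pmat (m : ℕ) : Matrix (Fin m) (Fin m) ℂ :=
  Matrix.of fun i j =>
    if ((i : ℕ) < m / 2 ∧ (j : ℕ) = 2 * (i : ℕ))
        ∨ (m / 2 ≤ (i : ℕ) ∧ (j : ℕ) = 2 * ((i : ℕ) - m / 2) + 1) then 1 else 0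

/-- The block-diagonal matrix `I_{m/2} ⊗ M` with `M = (1/2)·[[1, i],[1, −i]]`
(for `m` even), written entrywise. -/
def blockM (m : ℕ) : Matrix (Fin m) (Fin m) ℂ :=
  Matrix.of fun i j =>
    if (i : ℕ) / 2 = (j : ℕ) / 2 then
      (if (j : ℕ) % 2 = 0 then (1 / 2 : ℂ)
       else if (i : ℕ) % 2 = 0 then Complex.I / 2 else -(Complex.I / 2))
    else 0

/-- `Γ_m = P_m·(I_{m/2} ⊗ M)`. -/
def Gamma (m : ℕ) : Matrix (Fin m) (Fin m) ℂ := Pmat m * blockM m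

/-- Horizontal concatenation of two `n × h` matrices into an `n × 2h` matrix. -/
def hconcat {n h : ℕ} (X Y : Matrix (Fin n) (Fin h) ℂ) : Matrix (Fin n) (Fin (2 * h)) ℂ :=
  Matrix.of fun i j =>
    if hj : (j : ℕ) < h then X i ⟨j, hj⟩
    else Y i ⟨(j : ℕ) - h, by have := j.isLt; omega⟩

/-- Entrywise complexification of a real matrix. -/
def cmap {m n : Type*} (M : Matrix m n ℝ) : Matrix m n ℂ := M.map Complex.ofReal

/-! ### Auxiliary machinery -/

lemma theta_transpose (n : ℕ) : (Theta ℂ n)ᵀ = -(Theta ℂ n) := by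
  ext i j
  simp only [Theta, transpose_apply, Matrix.neg_apply, of_apply]
  split_ifs <;> first | omega | norm_num

/-- Values of the permutation underlying `Pmat (2*h)`. -/
def pv (h i : ℕ) : ℕ := if i < h then 2 * i else 2 * (i - h) + 1

lemma pv_lt (h : ℕ) (i : Fin (2 * h)) : pv h (i : ℕ) < 2 * h := by
  have := i.isLt; unfold pv; split <;> omega

lemma Pmat_apply (h : ℕ) (i j : Fin (2 * h)) :
    Pmat (2 * h) i j = if (j : ℕ) = pv h (i : ℕ) then 1 else 0 := by
  have hm : 2 * h / 2 = h := by omega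
  simp only [Pmat, of_apply, pv, hm]
  rcases Nat.lt_or_ge (i : ℕ) h with hi | hi
  · have h2 : ¬ h ≤ (i : ℕ) := by omega
    simp [hi, h2]
  · have h2 : ¬ (i : ℕ) < h := by omega
    simp [hi, h2]

lemma Pmat_mul (h : ℕ) (X : Matrix (Fin (2 * h)) (Fin (2 * h)) ℂ) (i j : Fin (2 * h)) :
    (Pmat (2 * h) * X) i j = X ⟨pv h (i : ℕ), pv_lt h i⟩ j := by
  rw [mul_apply]
  rw [Finset.sum_eq_single (⟨pv h (i : ℕ), pv_lt h i⟩ : Fin (2 * h))]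
  · rw [Pmat_apply]; simp
  · intro k _ hk
    rw [Pmat_apply, if_neg, zero_mul]
    intro hc; exact hk (Fin.ext hc)
  · simp

lemma mul_PmatT (h : ℕ) (X : Matrix (Fin (2 * h)) (Fin (2 * h)) ℂ) (i j : Fin (2 * h)) :
    (X * (Pmat (2 * h))ᵀ) i j = X i ⟨pv h (j : ℕ), pv_lt h j⟩ := by
  rw [mul_apply]
  rw [Finset.sum_eq_single (⟨pv h (j : ℕ), pv_lt h j⟩ : Fin (2 * h))]
  · rw [transpose_apply, Pmat_apply]; simp
  · intro k _ hk
    rw [transpose_apply, Pmat_apply, if_neg, mul_zero]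
    intro hc; exact hk (Fin.ext hc)
  · simp

/-- entrywise form of `blockM * blockMᵀ` -/
def Qm (m : ℕ) : Matrix (Fin m) (Fin m) ℂ :=
  Matrix.of fun i j => if (i : ℕ) / 2 = (j : ℕ) / 2 ∧ (i : ℕ) ≠ (j : ℕ) then (1/2 : ℂ) else 0

lemma blockM_mulT (h : ℕ) : blockM (2 * h) * (blockM (2 * h))ᵀ = Qm (2 * h) := by
  ext i j
  rw [mul_apply]
  simp only [transpose_apply]
  by_cases hij : (i : ℕ) / 2 = (j : ℕ) / 2
  · have hilt := i.isLt
    have hb : 2 * ((i : ℕ) / 2) + 1 < 2 * h := by omega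
    have ha : 2 * ((i : ℕ) / 2) < 2 * h := by omega
    have hab : (⟨2 * ((i : ℕ) / 2), ha⟩ : Fin (2 * h)) ≠ ⟨2 * ((i : ℕ) / 2) + 1, hb⟩ := by
      simp [Fin.ext_iff]
    have hzero : ∀ k ∈ Finset.univ, k ∉ ({⟨2 * ((i : ℕ) / 2), ha⟩,
        ⟨2 * ((i : ℕ) / 2) + 1, hb⟩} : Finset (Fin (2 * h))) →
        blockM (2 * h) i k * blockM (2 * h) j k = 0 := by
      intro k _ hk
      simp only [Finset.mem_insert, Finset.mem_singleton, not_or, Fin.ext_iff] at hk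
      have : ¬ ((i : ℕ) / 2 = (k : ℕ) / 2) := by omega
      simp [blockM, this]
    rw [← Finset.sum_subset (Finset.subset_univ _) hzero, Finset.sum_pair hab]
    simp only [blockM, Qm, of_apply]
    split_ifs <;>
      first
        | omega
        | linear_combination (1/4 : ℂ) * Complex.I_mul_I
        | linear_combination (-1/4 : ℂ) * Complex.I_mul_I
        | ring
        | norm_num
  · have h0 : Qm (2 * h) i j = 0 := by simp [Qm, hij]
    rw [h0]
    refine Finset.sum_eq_zero fun k _ => ?_
    by_cases hik : (i : ℕ) / 2 = (k : ℕ) / 2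
    · have : ¬ ((j : ℕ) / 2 = (k : ℕ) / 2) := by omega
      simp [blockM, this]
    · simp [blockM, hik]

/-- The half-swap matrix `½·[[0,I],[I,0]]`. -/
def Sw (h : ℕ) : Matrix (Fin (2 * h)) (Fin (2 * h)) ℂ :=
  Matrix.of fun i j => if (i : ℕ) + h = (j : ℕ) ∨ (j : ℕ) + h = (i : ℕ) then (1/2 : ℂ) else 0

lemma gamma_mulT (h : ℕ) : Gamma (2 * h) * (Gamma (2 * h))ᵀ = Sw h := by
  unfold Gamma
  rw [transpose_mul, show Pmat (2 * h) * blockM (2 * h) * ((blockM (2 * h))ᵀ * (Pmat (2 * h))ᵀ)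
      = Pmat (2 * h) * (blockM (2 * h) * (blockM (2 * h))ᵀ) * (Pmat (2 * h))ᵀ by
        simp only [mul_assoc]]
  rw [blockM_mulT]
  ext i j
  rw [mul_PmatT, Pmat_mul]
  have hi := i.isLt; have hj := j.isLt
  simp only [Qm, Sw, of_apply]
  by_cases hc : ((i : ℕ) + h = (j : ℕ) ∨ (j : ℕ) + h = (i : ℕ))
  · rw [if_pos hc, if_pos]
    unfold pv; split_ifs <;> omega
  · rw [if_neg hc, if_neg]
    rintro ⟨c1, c2⟩
    apply hc
    revert c1 c2
    unfold pv; split_ifs <;> omega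

lemma hconcat_apply_fst {n h : ℕ} (X Y : Matrix (Fin n) (Fin h) ℂ) (i : Fin n)
    (j : Fin (2 * h)) (b : Fin h) (hb : (j : ℕ) = (b : ℕ)) : hconcat X Y i j = X i b := by
  simp only [hconcat, of_apply]
  rw [dif_pos (show (j : ℕ) < h by have := b.isLt; omega)]
  congr 1
  exact Fin.ext hb

lemma hconcat_apply_snd {n h : ℕ} (X Y : Matrix (Fin n) (Fin h) ℂ) (i : Fin n)
    (j : Fin (2 * h)) (b : Fin h) (hb : (j : ℕ) = h + (b : ℕ)) : hconcat X Y i j = Y i b := by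
  simp only [hconcat, of_apply]
  rw [dif_neg (show ¬ (j : ℕ) < h by omega)]
  congr 1
  exact Fin.ext (show (j : ℕ) - h = (b : ℕ) by omega)

lemma hconcat_mul_sw {n h : ℕ} (X Y : Matrix (Fin n) (Fin h) ℂ) :
    hconcat X Y * Sw h = (1/2 : ℂ) • hconcat Y X := by
  ext i k
  rw [mul_apply]
  have hk := k.isLt
  by_cases hkh : (k : ℕ) < h
  · have hlt : (k : ℕ) + h < 2 * h := by omega
    rw [Finset.sum_eq_single (⟨(k : ℕ) + h, hlt⟩ : Fin (2 * h))]
    · rw [hconcat_apply_snd X Y i _ ⟨(k : ℕ), hkh⟩ (Nat.add_comm (k : ℕ) h),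
        show Sw h ⟨(k : ℕ) + h, hlt⟩ k = 1/2 by
          simp [Sw],
        Matrix.smul_apply, smul_eq_mul,
        hconcat_apply_fst Y X i k ⟨(k : ℕ), hkh⟩ rfl]
      exact mul_comm _ _
    · intro l _ hl
      have h0 : Sw h l k = 0 := by
        simp only [Sw, of_apply]
        rw [if_neg]
        rintro (hc | hc)
        · omega
        · exact hl (Fin.ext (show (l : ℕ) = (k : ℕ) + h by omega))
      rw [h0, mul_zero]
    · simp
  · have hlt : (k : ℕ) - h < 2 * h := by omega
    rw [Finset.sum_eq_single (⟨(k : ℕ) - h, hlt⟩ : Fin (2 * h))]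
    · rw [hconcat_apply_fst X Y i _ ⟨(k : ℕ) - h, by omega⟩ rfl,
        show Sw h ⟨(k : ℕ) - h, hlt⟩ k = 1/2 by
          simp only [Sw, of_apply]
          rw [if_pos (Or.inl (show (k : ℕ) - h + h = (k : ℕ) by omega))],
        Matrix.smul_apply, smul_eq_mul,
        hconcat_apply_snd Y X i k ⟨(k : ℕ) - h, by omega⟩
          (show (k : ℕ) = h + ((k : ℕ) - h) by omega)]
      exact mul_comm _ _
    · intro l _ hl
      have h0 : Sw h l k = 0 := by
        simp only [Sw, of_apply]
        rw [if_neg]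
        rintro (hc | hc)
        · exact hl (Fin.ext (show (l : ℕ) = (k : ℕ) - h by omega))
        · omega
      rw [h0, mul_zero]
    · simp

lemma hconcat_mul_hconcatT {n h : ℕ} (X Y W Z : Matrix (Fin n) (Fin h) ℂ) :
    hconcat X Y * (hconcat W Z)ᵀ = X * Wᵀ + Y * Zᵀ := by
  ext i j
  rw [mul_apply, Matrix.add_apply, mul_apply, mul_apply]
  simp only [transpose_apply]
  rw [← (finCongr (two_mul h).symm).sum_comp
    (fun k => hconcat X Y i k * hconcat W Z j k), Fin.sum_univ_add]
  congr 1
  · refine Finset.sum_congr rfl fun a _ => ?_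
    rw [hconcat_apply_fst X Y i _ a rfl, hconcat_apply_fst W Z j _ a rfl]
  · refine Finset.sum_congr rfl fun b _ => ?_
    rw [hconcat_apply_snd X Y i _ b rfl, hconcat_apply_snd W Z j _ b rfl]

lemma csc {n h : ℕ} (Λ : Matrix (Fin h) (Fin n) ℂ) :
    hconcat (-Λᴴ) Λᵀ * Sw h * (hconcat (-Λᴴ) Λᵀ)ᵀ
      = -((Λᴴ * Λ).map fun z => (z.re : ℂ)) := by
  rw [hconcat_mul_sw, Matrix.smul_mul, hconcat_mul_hconcatT]
  ext i j
  have hz : (Λᵀ * (Λᴴ)ᵀ) i j = conj ((Λᴴ * Λ) i j) := by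
    rw [mul_apply, mul_apply, map_sum]
    refine Finset.sum_congr rfl fun k _ => ?_
    simp only [transpose_apply, conjTranspose_apply, _root_.map_mul, RingHom.id_apply,
      RCLike.star_def, starRingEnd_self_apply]
  simp only [Matrix.smul_apply, Matrix.add_apply, Matrix.neg_apply, map_apply, smul_eq_mul,
    Matrix.mul_neg, Matrix.neg_mul, transpose_neg, transpose_transpose]
  rw [hz]
  set z := (Λᴴ * Λ) i j
  rw [show -(conj z) + -z = -(z + conj z) by ring, Complex.add_conj]
  push_cast
  ring

/-- `B·Bᵀ = −4·Θ_n·Re(Λ†·Λ)·Θ_n` for `B = 2i·Θ_n·[−Λ† Λᵀ]·Γ_m`. -/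
theorem B_mul_B_transpose
    (n h : ℕ) (hn : Even n) (hn0 : 0 < n) (hh0 : 0 < h)
    (Λ : Matrix (Fin h) (Fin n) ℂ)
    (B : Matrix (Fin n) (Fin (2 * h)) ℂ)
    (hB : B = (2 * Complex.I) • (Theta ℂ n * hconcat (-Λᴴ) Λᵀ * Gamma (2 * h))) :
    B * Bᵀ = (-4 : ℂ) • (Theta ℂ n * (Λᴴ * Λ).map (fun z => (z.re : ℂ)) * Theta ℂ n) := by
  subst hB
  rw [transpose_smul, Matrix.smul_mul, Matrix.mul_smul, smul_smul]
  have h4 : (2 * Complex.I) * (2 * Complex.I) = -4 := by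
    linear_combination (4 : ℂ) * Complex.I_mul_I
  rw [h4]
  congr 1
  rw [transpose_mul, transpose_mul]
  have key : Theta ℂ n * hconcat (-Λᴴ) Λᵀ * Gamma (2 * h) *
      ((Gamma (2 * h))ᵀ * ((hconcat (-Λᴴ) Λᵀ)ᵀ * (Theta ℂ n)ᵀ))
      = Theta ℂ n * (hconcat (-Λᴴ) Λᵀ * Sw h * (hconcat (-Λᴴ) Λᵀ)ᵀ * (Theta ℂ n)ᵀ) := by
    rw [← gamma_mulT h]
    simp only [Matrix.mul_assoc]
  rw [key, csc, theta_transpose]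
  simp only [Matrix.neg_mul, Matrix.mul_neg, neg_neg, Matrix.mul_assoc]
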